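/- Let D = diag(d₁,…,dₙ) with all dᵢ > 0, α, λ > 0, and h(x) = λ‖x‖₂. The point 0 is a global minimizer of F(z) = (1/2)‖z−x‖₂² + αλ‖Dz‖₂ if and only if ‖D⁻¹x‖₂ ≤ αλ. -/

import Mathlib

/-- `0` is a global minimizer of `F(z) = (1/2)‖z−x‖₂² + αλ‖Dz‖₂` if and only if
`‖D⁻¹x‖₂ ≤ αλ`, for a positive definite diagonal matrix `D = diag(d₁,…,dₙ)`. -/
theorem stmt_1 (n : ℕ) (d x : Fin n → ℝ) (hd : ∀ i, 0 < d i) (α lam : ℝ)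
    (hα : 0 < α) (hlam : 0 < lam) :
    (∀ z : Fin n → ℝ,
        (1/2) * (∑ i, (x i)^2) ≤
        (1/2) * (∑ i, (z i - x i)^2) + α * lam * Real.sqrt (∑ i, (d i * z i)^2)) ↔
      Real.sqrt (∑ i, (x i / d i)^2) ≤ α * lam := by
  have had : 0 < α * lam := mul_pos hα hlam
  have hdne : ∀ i, d i ≠ 0 := fun i => (hd i).ne'
  set S2 : ℝ := ∑ i, (x i / d i)^2 with hS2def
  have hS2nn : 0 ≤ S2 := Finset.sum_nonneg fun i _ => sq_nonneg _
  constructor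
  · intro h
    set Q : ℝ := ∑ i, (x i / (d i)^2)^2 with hQdef
    have hQnn : 0 ≤ Q := Finset.sum_nonneg fun i _ => sq_nonneg _
    have key : ∀ t : ℝ, 0 < t → S2 ≤ t * Q / 2 + α * lam * Real.sqrt S2 := by
      intro t ht
      have hz := h (fun i => t * x i / (d i)^2)
      have e1 : ∑ i, ((fun i => t * x i / (d i)^2) i - x i)^2
          = (∑ i, (x i)^2) - 2 * t * S2 + t^2 * Q := by
        rw [hS2def, hQdef, Finset.mul_sum, Finset.mul_sum, ← Finset.sum_sub_distrib,
          ← Finset.sum_add_distrib]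
        refine Finset.sum_congr rfl fun i _ => ?_
        have := hdne i
        field_simp
        ring
      have e2 : (∑ i, (d i * ((fun i => t * x i / (d i)^2) i))^2) = t^2 * S2 := by
        rw [hS2def, Finset.mul_sum]
        refine Finset.sum_congr rfl fun i _ => ?_
        have := hdne i
        field_simp
      rw [e1, e2] at hz
      have e3 : Real.sqrt (t^2 * S2) = t * Real.sqrt S2 := by
        rw [Real.sqrt_mul (sq_nonneg t), Real.sqrt_sq ht.le]
      rw [e3] at hz
      have : t * S2 ≤ t * (t * Q / 2) + t * (α * lam * Real.sqrt S2) := by nlinarith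
      have := (mul_le_mul_iff_right₀ ht).mp (by linarith : t * S2 ≤ t * (t * Q / 2 + α * lam * Real.sqrt S2))
      linarith
    have hfin : S2 ≤ α * lam * Real.sqrt S2 := by
      refine le_of_forall_pos_le_add fun ε hε => ?_
      have ht : 0 < 2 * ε / (Q + 1) := by positivity
      have := key _ ht
      have hQ1 : 0 < Q + 1 := by linarith
      have : (2 * ε / (Q + 1)) * Q / 2 ≤ ε := by
        rw [div_mul_eq_mul_div, div_div, div_le_iff₀ (by positivity : (0:ℝ) < (Q+1)*2)]
        nlinarith
      linarith [key _ ht]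
    rcases eq_or_lt_of_le hS2nn with h0 | hpos
    · rw [← h0]
      simp [Real.sqrt_zero, had.le]
    · have hsq : Real.sqrt S2 * Real.sqrt S2 = S2 := Real.mul_self_sqrt hS2nn
      have hspos : 0 < Real.sqrt S2 := Real.sqrt_pos.mpr hpos
      nlinarith
  · intro hle z
    set N : ℝ := Real.sqrt (∑ i, (d i * z i)^2) with hNdef
    have hNnn : 0 ≤ N := Real.sqrt_nonneg _
    have cauchy : ∑ i, z i * x i ≤ N * Real.sqrt S2 := by
      have h1 : ∑ i, z i * x i = ∑ i, (d i * z i) * (x i / d i) := by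
        refine Finset.sum_congr rfl fun i _ => ?_
        field_simp [hdne i]
      rw [h1, hNdef, hS2def]
      exact Real.sum_mul_le_sqrt_mul_sqrt _ _ _
    have hzx : ∑ i, z i * x i ≤ α * lam * N := by
      calc ∑ i, z i * x i ≤ N * Real.sqrt S2 := cauchy
        _ ≤ N * (α * lam) := mul_le_mul_of_nonneg_left hle hNnn
        _ = α * lam * N := by ring
    have expand : ∑ i, (z i - x i)^2
        = (∑ i, (z i)^2) - 2 * (∑ i, z i * x i) + ∑ i, (x i)^2 := by
      rw [Finset.mul_sum, ← Finset.sum_sub_distrib, ← Finset.sum_add_distrib]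
      refine Finset.sum_congr rfl fun i _ => ?_
      ring
    have hz2 : 0 ≤ ∑ i, (z i)^2 := Finset.sum_nonneg fun i _ => sq_nonneg _
    rw [expand]
    nlinarith
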